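/- Let ℓ ≥ 3 and m, n ≥ 4 be integers. Suppose there exists a finite set A ⊆ ℝ² with pairwise distinct x-coordinates, of cardinality a, containing no ℓ collinear points, no (m−1)-cup, and no n-cap; and suppose there exists a finite set B ⊆ ℝ² with pairwise distinct x-coordinates, of cardinality b, containing no ℓ collinear points, no m-cup, and no (n−1)-cap. Then there exists a finite set X ⊆ ℝ² with pairwise distinct x-coordinates, of cardinality a + b, containing no ℓ collinear points, no m-cup, and no n-cap. (Equivalently, f_ℓ(m,n) − 1 ≥ (f_ℓ(m−1,n) − 1) + (f_ℓ(m,n−1) − 1).) -/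
import Mathlib


open Finset

noncomputable section

abbrev Pt : Type := ℝ × ℝ

/-- `P` contains `l` collinear points. -/
def HasCollinear (l : ℕ) (P : Finset Pt) : Prop :=
  ∃ S : Finset Pt, S ⊆ P ∧ S.card = l ∧ Collinear ℝ (S : Set Pt)

/-- `X` is in convex position: no point of `X` lies in the convex hull of the others. -/
def ConvexPos (X : Finset Pt) : Prop :=
  ∀ x ∈ X, x ∉ convexHull ℝ ((X.erase x : Finset Pt) : Set Pt)

/-- `p 0, …, p (k-1)` have strictly increasing x-coordinates and each `p (i+1)` lies
strictly below the line through `p i` and `p (i+2)` (a `k`-cup). -/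
def IsCupSeq {k : ℕ} (p : Fin k → Pt) : Prop :=
  (∀ i j : Fin k, i < j → (p i).1 < (p j).1) ∧
  ∀ i : ℕ, ∀ h : i + 2 < k,
    ((p ⟨i + 1, by omega⟩).2 - (p ⟨i, by omega⟩).2) * ((p ⟨i + 2, h⟩).1 - (p ⟨i, by omega⟩).1)
      < ((p ⟨i + 2, h⟩).2 - (p ⟨i, by omega⟩).2) * ((p ⟨i + 1, by omega⟩).1 - (p ⟨i, by omega⟩).1)

/-- `p 0, …, p (k-1)` have strictly increasing x-coordinates and each `p (i+1)` lies
strictly above the line through `p i` and `p (i+2)` (a `k`-cap). -/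
def IsCapSeq {k : ℕ} (p : Fin k → Pt) : Prop :=
  (∀ i j : Fin k, i < j → (p i).1 < (p j).1) ∧
  ∀ i : ℕ, ∀ h : i + 2 < k,
    ((p ⟨i + 1, by omega⟩).2 - (p ⟨i, by omega⟩).2) * ((p ⟨i + 2, h⟩).1 - (p ⟨i, by omega⟩).1)
      > ((p ⟨i + 2, h⟩).2 - (p ⟨i, by omega⟩).2) * ((p ⟨i + 1, by omega⟩).1 - (p ⟨i, by omega⟩).1)

/-- `P` contains a `k`-cup. -/
def HasCup (k : ℕ) (P : Finset Pt) : Prop :=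
  ∃ p : Fin k → Pt, (∀ i, p i ∈ P) ∧ IsCupSeq p

/-- `P` contains a `k`-cap. -/
def HasCap (k : ℕ) (P : Finset Pt) : Prop :=
  ∃ p : Fin k → Pt, (∀ i, p i ∈ P) ∧ IsCapSeq p

/-- The points of `P` have pairwise distinct x-coordinates. -/
def DistinctX (P : Finset Pt) : Prop :=
  Set.InjOn Prod.fst (P : Set Pt)

/-- There is an affine line (given by the equation `a*x + b*y = c`) strictly
separating `A` from `B`. -/
def SepLine (A B : Set Pt) : Prop :=
  ∃ a b c : ℝ, (a, b) ≠ ((0 : ℝ), (0 : ℝ)) ∧ (∀ x ∈ A, a * x.1 + b * x.2 < c) ∧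
    (∀ y ∈ B, c < a * y.1 + b * y.2)

/-- `P` avoids `K`: the line through any two distinct points of `P` is disjoint from `K`. -/
def Avoids (P : Finset Pt) (K : Set Pt) : Prop :=
  ∀ p ∈ P, ∀ q ∈ P, p ≠ q → ∀ x ∈ K, x ∉ affineSpan ℝ ({p, q} : Set Pt)

/-- `X` is an inner-cap with respect to `K`. -/
def InnerCap (K : Set Pt) (X : Finset Pt) : Prop :=
  ∀ x ∈ X, SepLine {x} (convexHull ℝ (((X.erase x : Finset Pt) : Set Pt) ∪ K))

/-- `X` is an outer-cup with respect to `K`. -/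
def OuterCup (K : Set Pt) (X : Finset Pt) : Prop :=
  ∀ x ∈ X, SepLine (convexHull ℝ ({x} ∪ K)) ((X.erase x : Finset Pt) : Set Pt)

/-- The line `L` crosses the cell `Δ`: it meets `Δ` but does not contain it. -/
def Crosses (L Δ : Set Pt) : Prop := (L ∩ Δ).Nonempty ∧ ¬ Δ ⊆ L

/-- **Recursive gluing step for the lower bound of `f_ℓ(m,n)`.** If there is an `a`-point
configuration with no `ℓ` collinear points, no `(m−1)`-cup and no `n`-cap, and a `b`-point
configuration with no `ℓ` collinear points, no `m`-cup and no `(n−1)`-cap, then there is an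
`(a+b)`-point configuration with no `ℓ` collinear points, no `m`-cup and no `n`-cap. -/
-- cross of three collinear points vanishes
lemma cr_eq_zero_of_collinear {S : Set Pt} (hS : Collinear ℝ S)
    {p q r : Pt} (hp : p ∈ S) (hq : q ∈ S) (hr : r ∈ S) :
    (q.1 - p.1) * (r.2 - p.2) - (q.2 - p.2) * (r.1 - p.1) = 0 := by
  obtain ⟨v, hv⟩ := (collinear_iff_of_mem hp).1 hS
  obtain ⟨tq, hq'⟩ := hv q hq
  obtain ⟨tr, hr'⟩ := hv r hr
  have hq1 : q.1 = tq * v.1 + p.1 := by rw [hq']; rfl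
  have hq2 : q.2 = tq * v.2 + p.2 := by rw [hq']; rfl
  have hr1 : r.1 = tr * v.1 + p.1 := by rw [hr']; rfl
  have hr2 : r.2 = tr * v.2 + p.2 := by rw [hr']; rfl
  rw [hq1, hq2, hr1, hr2]; ring

-- contiguous subsequence of a cup is a cup
lemma IsCupSeq.segment {k : ℕ} {p : Fin k → Pt} (h : IsCupSeq p) (s t : ℕ) (hst : s + t ≤ k) :
    IsCupSeq (fun j : Fin t => p ⟨s + j, by omega⟩) := by
  constructor
  · intro i j hij
    exact h.1 ⟨s + i, by omega⟩ ⟨s + j, by omega⟩ (by rw [Fin.mk_lt_mk]; have := Fin.lt_def.1 hij; omega)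
  · intro i hi
    exact h.2 (s + i) (by omega)

lemma IsCapSeq.segment {k : ℕ} {p : Fin k → Pt} (h : IsCapSeq p) (s t : ℕ) (hst : s + t ≤ k) :
    IsCapSeq (fun j : Fin t => p ⟨s + j, by omega⟩) := by
  constructor
  · intro i j hij
    exact h.1 ⟨s + i, by omega⟩ ⟨s + j, by omega⟩ (by rw [Fin.mk_lt_mk]; have := Fin.lt_def.1 hij; omega)
  · intro i hi
    exact h.2 (s + i) (by omega)

-- appended to a.lean content for test
def trv (u v : ℝ) : Pt → Pt := fun q => (q.1 + u, q.2 + v)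

lemma trv_inj (u v : ℝ) : Function.Injective (trv u v) := by
  intro a b h
  simp only [trv, Prod.mk.injEq] at h
  exact Prod.ext (by linarith [h.1]) (by linarith [h.2])

lemma distinctX_image {B : Finset Pt} (u v : ℝ) (hB : DistinctX B) :
    DistinctX (B.image (trv u v)) := by
  intro x hx y hy hxy
  simp only [coe_image, Set.mem_image] at hx hy
  obtain ⟨a, ha, rfl⟩ := hx
  obtain ⟨b, hb, rfl⟩ := hy
  simp only [trv] at hxy ⊢
  have : a.1 = b.1 := by simpa using hxy
  rw [hB ha hb this]

lemma hasCup_image {B : Finset Pt} {u v : ℝ} {k : ℕ}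
    (h : HasCup k (B.image (trv u v))) : HasCup k B := by
  obtain ⟨p, hmem, hx, hc⟩ := h
  refine ⟨fun i => ((p i).1 - u, (p i).2 - v), fun i => ?_, ?_, ?_⟩
  · obtain ⟨b, hb, hbe⟩ := mem_image.1 (hmem i)
    have : ((p i).1 - u, (p i).2 - v) = b := by
      rw [← hbe]; simp [trv]
    show ((p i).1 - u, (p i).2 - v) ∈ B
    rwa [this]
  · intro i j hij; simpa using hx i j hij
  · intro i h2
    have := hc i h2
    dsimp only
    ring_nf
    ring_nf at this
    linarith

lemma hasCap_image {B : Finset Pt} {u v : ℝ} {k : ℕ}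
    (h : HasCap k (B.image (trv u v))) : HasCap k B := by
  obtain ⟨p, hmem, hx, hc⟩ := h
  refine ⟨fun i => ((p i).1 - u, (p i).2 - v), fun i => ?_, ?_, ?_⟩
  · obtain ⟨b, hb, hbe⟩ := mem_image.1 (hmem i)
    have : ((p i).1 - u, (p i).2 - v) = b := by
      rw [← hbe]; simp [trv]
    show ((p i).1 - u, (p i).2 - v) ∈ B
    rwa [this]
  · intro i j hij; simpa using hx i j hij
  · intro i h2
    have := hc i h2
    dsimp only
    ring_nf
    ring_nf at this
    linarith

lemma hasCollinear_image {B : Finset Pt} {u v : ℝ} {l : ℕ}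
    (h : HasCollinear l (B.image (trv u v))) : HasCollinear l B := by
  obtain ⟨S, hsub, hcard, hcol⟩ := h
  refine ⟨S.image (trv (-u) (-v)), ?_, ?_, ?_⟩
  · intro x hx
    obtain ⟨s, hs, rfl⟩ := mem_image.1 hx
    obtain ⟨b, hb, hbe⟩ := mem_image.1 (hsub hs)
    have : trv (-u) (-v) s = b := by rw [← hbe]; simp [trv]
    rwa [this]
  · rw [card_image_of_injective _ (trv_inj _ _), hcard]
  · rcases S.eq_empty_or_nonempty with rfl | ⟨p₀, hp₀⟩
    · simp [collinear_empty]
    · have hp₀' : trv (-u) (-v) p₀ ∈ (S.image (trv (-u) (-v)) : Set Pt) := by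
        simp only [coe_image]; exact Set.mem_image_of_mem _ hp₀
      rw [collinear_iff_of_mem hp₀']
      obtain ⟨w, hw⟩ := (collinear_iff_of_mem (show p₀ ∈ (S : Set Pt) from hp₀)).1 hcol
      refine ⟨w, ?_⟩
      intro x hx
      simp only [coe_image, Set.mem_image] at hx
      obtain ⟨s, hs, rfl⟩ := hx
      obtain ⟨t, ht⟩ := hw s hs
      refine ⟨t, ?_⟩
      simp only [trv, ht]
      ext <;> simp <;> ring

lemma glue {l m n : ℕ} (hl : 3 ≤ l) (hm : 4 ≤ m) (hn : 4 ≤ n) (A B' : Finset Pt)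
    (hAx : DistinctX A) (hBx : DistinctX B')
    (hsep : ∀ a ∈ A, ∀ b ∈ B', a.1 < b.1)
    (h2 : ∀ a0 ∈ A, ∀ a1 ∈ A, a0.1 < a1.1 → ∀ b ∈ B',
      (a1.2 - a0.2) * (b.1 - a0.1) < (b.2 - a0.2) * (a1.1 - a0.1))
    (h1 : ∀ a ∈ A, ∀ b0 ∈ B', ∀ b1 ∈ B', b0.1 < b1.1 →
      (b1.2 - a.2) * (b0.1 - a.1) < (b0.2 - a.2) * (b1.1 - a.1))
    (hcolA : ¬HasCollinear l A) (hcupA : ¬HasCup (m-1) A) (hcapA : ¬HasCap n A)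
    (hcolB : ¬HasCollinear l B') (hcupB : ¬HasCup m B') (hcapB : ¬HasCap (n-1) B') :
    DistinctX (A ∪ B') ∧ Disjoint A B' ∧ ¬HasCollinear l (A ∪ B') ∧
      ¬HasCup m (A ∪ B') ∧ ¬HasCap n (A ∪ B') := by
  have hdisj : Disjoint A B' := by
    rw [Finset.disjoint_left]
    intro x hxA hxB
    exact lt_irrefl x.1 (hsep x hxA x hxB)
  refine ⟨?_, hdisj, ?_, ?_, ?_⟩
  · -- DistinctX
    intro x hx y hy hxy
    simp only [coe_union, Set.mem_union] at hx hy
    rcases hx with hx | hx <;> rcases hy with hy | hy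
    · exact hAx hx hy hxy
    · exact absurd hxy (ne_of_lt (hsep x hx y hy))
    · exact absurd hxy.symm (ne_of_lt (hsep y hy x hx))
    · exact hBx hx hy hxy
  · -- no l collinear
    rintro ⟨S, hsub, hcard, hcol⟩
    -- every element of S is in A or B'
    have hmem : ∀ x ∈ S, x ∈ A ∨ x ∈ B' := by
      intro x hx; exact Finset.mem_union.1 (hsub hx)
    by_cases hSA : ∀ x ∈ S, x ∈ A
    · exact hcolA ⟨S, fun x hx => hSA x hx, hcard, hcol⟩
    by_cases hSB : ∀ x ∈ S, x ∈ B'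
    · exact hcolB ⟨S, fun x hx => hSB x hx, hcard, hcol⟩
    push_neg at hSA hSB
    obtain ⟨b, hbS, hbA⟩ := hSA
    obtain ⟨a, haS, haB⟩ := hSB
    have hbB : b ∈ B' := (hmem b hbS).resolve_left hbA
    have haA : a ∈ A := (hmem a haS).resolve_right haB
    have hab : a ≠ b := by rintro rfl; exact hbA haA
    -- third point
    have h3 : ∃ c ∈ S, c ≠ a ∧ c ≠ b := by
      by_contra hc
      push_neg at hc
      have : S ⊆ {a, b} := by
        intro x hx
        rcases eq_or_ne x a with rfl | hxa
        · simp
        rcases eq_or_ne x b with rfl | hxb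
        · simp
        · rw [hc x hx hxa]; simp
      have := Finset.card_le_card this
      rw [hcard] at this
      have : l ≤ 2 := le_trans this (Finset.card_insert_le _ _ |>.trans (by simp))
      omega
    obtain ⟨c, hcS, hca, hcb⟩ := h3
    rcases hmem c hcS with hcA | hcB
    · -- a, c ∈ A distinct, b ∈ B'
      have hx : a.1 ≠ c.1 := fun h => hca.symm (hAx (by exact haA) (by exact hcA) h)
      rcases lt_or_gt_of_ne hx with h | h
      · have := h2 a haA c hcA h b hbB
        have hz := cr_eq_zero_of_collinear hcol (show a ∈ (S:Set Pt) from haS)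
          (show c ∈ (S:Set Pt) from hcS) (show b ∈ (S:Set Pt) from hbS)
        nlinarith [hz, this]
      · have := h2 c hcA a haA h b hbB
        have hz := cr_eq_zero_of_collinear hcol (show c ∈ (S:Set Pt) from hcS)
          (show a ∈ (S:Set Pt) from haS) (show b ∈ (S:Set Pt) from hbS)
        nlinarith [hz, this]
    · -- b, c ∈ B' distinct, a ∈ A
      have hx : b.1 ≠ c.1 := fun h => hcb.symm (hBx (by exact hbB) (by exact hcB) h)
      rcases lt_or_gt_of_ne hx with h | h
      · have := h1 a haA b hbB c hcB h
        have hz := cr_eq_zero_of_collinear hcol (show a ∈ (S:Set Pt) from haS)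
          (show b ∈ (S:Set Pt) from hbS) (show c ∈ (S:Set Pt) from hcS)
        nlinarith [hz, this]
      · have := h1 a haA c hcB b hbB h
        have hz := cr_eq_zero_of_collinear hcol (show a ∈ (S:Set Pt) from haS)
          (show c ∈ (S:Set Pt) from hcS) (show b ∈ (S:Set Pt) from hbS)
        nlinarith [hz, this]
  · -- no m-cup
    rintro ⟨p, hmem, hcup⟩
    have hAorB : ∀ i, p i ∈ A ∨ p i ∈ B' := fun i => Finset.mem_union.1 (hmem i)
    -- A-indices form an initial segment
    have hinit : ∀ i j : Fin m, i ≤ j → p j ∈ A → p i ∈ A := by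
      intro i j hij hj
      rcases eq_or_lt_of_le hij with rfl | hlt
      · exact hj
      rcases hAorB i with h | h
      · exact h
      · exact absurd (hcup.1 i j hlt) (not_lt.2 (le_of_lt (hsep (p j) hj (p i) h)))
    by_cases hM2 : p ⟨m-2, by omega⟩ ∈ A
    · -- first m-1 points are in A : (m-1)-cup in A
      refine hcupA ⟨fun j : Fin (m-1) => p ⟨0 + j, by omega⟩, ?_, hcup.segment 0 (m-1) (by omega)⟩
      intro j
      exact hinit ⟨0 + j.1, by omega⟩ ⟨m-2, by omega⟩ (by simp [Fin.le_def]; omega) hM2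
    · by_cases hallB : ∀ i, p i ∈ B'
      · exact hcupB ⟨p, hallB, hcup⟩
      push_neg at hallB
      obtain ⟨i0, hi0⟩ := hallB
      have hi0A : p i0 ∈ A := (hAorB i0).resolve_right hi0
      -- maximal index with p t ∈ A
      obtain ⟨t, htA, htmax⟩ : ∃ t : Fin m, p t ∈ A ∧ ∀ j : Fin m, p j ∈ A → j ≤ t := by
        classical
        obtain ⟨t, ht, htm⟩ := Finset.exists_max_image (Finset.univ.filter (fun i => p i ∈ A))
          id ⟨i0, by simp [hi0A]⟩
        exact ⟨t, (Finset.mem_filter.1 ht).2, fun j hj => htm j (by simp [hj])⟩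
      have htlt : t.1 < m - 2 := by
        by_contra hge
        push_neg at hge
        exact hM2 (hinit ⟨m-2, by omega⟩ t (by simp [Fin.le_def]; omega) htA)
      have ht1B : p ⟨t.1 + 1, by omega⟩ ∈ B' := by
        rcases hAorB ⟨t.1 + 1, by omega⟩ with h | h
        · exact absurd (htmax _ h) (by simp [Fin.le_def])
        · exact h
      have ht2B : p ⟨t.1 + 2, by omega⟩ ∈ B' := by
        rcases hAorB ⟨t.1 + 2, by omega⟩ with h | h
        · exact absurd (htmax _ h) (by simp [Fin.le_def])
        · exact h
      have hxo : (p ⟨t.1 + 1, by omega⟩).1 < (p ⟨t.1 + 2, by omega⟩).1 :=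
        hcup.1 _ _ (by simp [Fin.lt_def])
      have hcontra := h1 (p ⟨t.1, by omega⟩) (by rwa [Fin.eta]) _ ht1B _ ht2B hxo
      have := hcup.2 t.1 (by omega)
      linarith
  · -- no n-cap
    rintro ⟨p, hmem, hcap⟩
    have hAorB : ∀ i, p i ∈ A ∨ p i ∈ B' := fun i => Finset.mem_union.1 (hmem i)
    have hinit : ∀ i j : Fin n, i ≤ j → p j ∈ A → p i ∈ A := by
      intro i j hij hj
      rcases eq_or_lt_of_le hij with rfl | hlt
      · exact hj
      rcases hAorB i with h | h
      · exact h
      · exact absurd (hcap.1 i j hlt) (not_lt.2 (le_of_lt (hsep (p j) hj (p i) h)))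
    by_cases h1B : p ⟨1, by omega⟩ ∈ B'
    · -- indices ≥ 1 all in B' : (n-1)-cap in B'
      refine hcapB ⟨fun j : Fin (n-1) => p ⟨1 + j, by omega⟩, ?_, hcap.segment 1 (n-1) (by omega)⟩
      intro j
      rcases hAorB ⟨1 + j.1, by omega⟩ with h | h
      · exact absurd (hinit ⟨1, by omega⟩ ⟨1 + j.1, by omega⟩ (by simp [Fin.le_def]) h)
          (by intro hc; exact absurd h1B (by simp [Finset.disjoint_left.1 hdisj hc]))
      · exact h
    · have h1A : p ⟨1, by omega⟩ ∈ A := (hAorB _).resolve_right h1B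
      by_cases hallA : ∀ i, p i ∈ A
      · exact hcapA ⟨p, hallA, hcap⟩
      push_neg at hallA
      obtain ⟨i0, hi0⟩ := hallA
      -- minimal index with p j ∈ B'
      obtain ⟨t, htB, htmin⟩ : ∃ t : Fin n, p t ∈ B' ∧ ∀ j : Fin n, p j ∈ B' → t ≤ j := by
        classical
        obtain ⟨t, ht, htm⟩ := Finset.exists_min_image (Finset.univ.filter (fun i => p i ∈ B'))
          id ⟨i0, by simp [(hAorB i0).resolve_left hi0]⟩
        exact ⟨t, (Finset.mem_filter.1 ht).2, fun j hj => htm j (by simp [hj])⟩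
      have ht2 : 2 ≤ t.1 := by
        by_contra hlt
        push_neg at hlt
        have hle : t ≤ (⟨1, by omega⟩ : Fin n) := Fin.le_def.mpr (show t.1 ≤ 1 by omega)
        have : p t ∈ A := hinit t ⟨1, by omega⟩ hle h1A
        exact absurd htB (Finset.disjoint_left.1 hdisj this)
      have hprev : ∀ j : Fin n, j.1 < t.1 → p j ∈ A := by
        intro j hj
        rcases hAorB j with h | h
        · exact h
        · exact absurd (htmin j h) (by rw [Fin.le_def]; omega)
      have hA0 : p ⟨t.1 - 2, by omega⟩ ∈ A := hprev _ (show t.1 - 2 < t.1 by omega)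
      have hA1 : p ⟨t.1 - 2 + 1, by omega⟩ ∈ A := hprev _ (show t.1 - 2 + 1 < t.1 by omega)
      have hteq : (⟨t.1 - 2 + 2, by omega⟩ : Fin n) = t := Fin.ext (show t.1 - 2 + 2 = t.1 by omega)
      have hxo : (p ⟨t.1 - 2, by omega⟩).1 < (p ⟨t.1 - 2 + 1, by omega⟩).1 :=
        hcap.1 _ _ (Fin.mk_lt_mk.mpr (by omega))
      have hcontra := h2 _ hA0 _ hA1 hxo (p t) htB
      have hc2 := hcap.2 (t.1 - 2) (show t.1 - 2 + 2 < n by omega)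
      rw [congrArg p hteq] at hc2
      linarith

lemma exists_forall_lt {ι : Type*} (s : Finset ι) (f : ι → ℝ) : ∃ M : ℝ, ∀ i ∈ s, f i < M := by
  rcases s.eq_empty_or_nonempty with rfl | hs
  · exact ⟨0, by simp⟩
  · exact ⟨s.sup' hs f + 1, fun i hi => lt_of_le_of_lt (le_sup' f hi) (by linarith)⟩

lemma hasCup_mono {k k' : ℕ} (h : k' ≤ k) {P : Finset Pt} : HasCup k P → HasCup k' P := by
  rintro ⟨p, hmm, hc⟩
  exact ⟨fun j : Fin k' => p ⟨0 + j, by omega⟩, fun j => hmm _, hc.segment 0 k' (by omega)⟩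

lemma hasCap_mono {k k' : ℕ} (h : k' ≤ k) {P : Finset Pt} : HasCap k P → HasCap k' P := by
  rintro ⟨p, hmm, hc⟩
  exact ⟨fun j : Fin k' => p ⟨0 + j, by omega⟩, fun j => hmm _, hc.segment 0 k' (by omega)⟩

theorem stmt9 :
    ∀ l m n : ℕ, 3 ≤ l → 4 ≤ m → 4 ≤ n →
    ∀ A B : Finset Pt,
      DistinctX A → ¬ HasCollinear l A → ¬ HasCup (m - 1) A → ¬ HasCap n A →
      DistinctX B → ¬ HasCollinear l B → ¬ HasCup m B → ¬ HasCap (n - 1) B →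
      ∃ X : Finset Pt,
        DistinctX X ∧ X.card = A.card + B.card ∧
        ¬ HasCollinear l X ∧ ¬ HasCup m X ∧ ¬ HasCap n X := by
  intro l m n hl hm hn A B hAx hAcol hAcup hAcap hBx hBcol hBcup hBcap
  rcases A.eq_empty_or_nonempty with rfl | hA
  · exact ⟨B, hBx, by simp, hBcol, hBcup, fun h => hBcap (hasCap_mono (by omega) h)⟩
  rcases B.eq_empty_or_nonempty with rfl | hB
  · exact ⟨A, hAx, by simp, hAcol, fun h => hAcup (hasCup_mono (by omega) h), hAcap⟩
  set xA := A.sup' hA Prod.fst with hxA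
  set xB := B.inf' hB Prod.fst with hxB
  set dx := xA - xB + 1 with hdx
  obtain ⟨M1, hM1⟩ := exists_forall_lt ((A ×ˢ A) ×ˢ B) (fun x =>
    ((x.1.2.2 - x.1.1.2) * (x.2.1 + dx - x.1.1.1)
      - (x.2.2 - x.1.1.2) * (x.1.2.1 - x.1.1.1)) / (x.1.2.1 - x.1.1.1))
  obtain ⟨M2, hM2⟩ := exists_forall_lt (A ×ˢ (B ×ˢ B)) (fun y =>
    ((y.2.2.2 - y.1.2) * (y.2.1.1 + dx - y.1.1)
      - (y.2.1.2 - y.1.2) * (y.2.2.1 + dx - y.1.1)) / (y.2.2.1 - y.2.1.1))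
  set M := max M1 M2 with hM
  set B' := B.image (trv dx M) with hB'
  have hmemB' : ∀ b' ∈ B', ∃ b ∈ B, b' = (b.1 + dx, b.2 + M) := by
    intro b' hb'
    obtain ⟨b, hb, rfl⟩ := Finset.mem_image.1 hb'
    exact ⟨b, hb, rfl⟩
  have hsep : ∀ a ∈ A, ∀ b' ∈ B', a.1 < b'.1 := by
    intro a ha b' hb'
    obtain ⟨b, hb, rfl⟩ := hmemB' b' hb'
    have h1 : a.1 ≤ xA := le_sup' Prod.fst ha
    have h2 : xB ≤ b.1 := inf'_le Prod.fst hb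
    simp only [hdx]
    linarith
  have h2' : ∀ a0 ∈ A, ∀ a1 ∈ A, a0.1 < a1.1 → ∀ b' ∈ B',
      (a1.2 - a0.2) * (b'.1 - a0.1) < (b'.2 - a0.2) * (a1.1 - a0.1) := by
    intro a0 ha0 a1 ha1 hlt b' hb'
    obtain ⟨b, hb, rfl⟩ := hmemB' b' hb'
    have hf := hM1 ((a0, a1), b)
      (Finset.mem_product.mpr ⟨Finset.mem_product.mpr ⟨ha0, ha1⟩, hb⟩)
    have hd : (0:ℝ) < a1.1 - a0.1 := by linarith
    have hf' : ((a1.2 - a0.2) * (b.1 + dx - a0.1)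
        - (b.2 - a0.2) * (a1.1 - a0.1)) / (a1.1 - a0.1) < M :=
      lt_of_lt_of_le hf (le_max_left _ _)
    rw [div_lt_iff₀ hd] at hf'
    show (a1.2 - a0.2) * ((b.1 + dx) - a0.1) < ((b.2 + M) - a0.2) * (a1.1 - a0.1)
    nlinarith [hf']
  have h1' : ∀ a ∈ A, ∀ b0 ∈ B', ∀ b1 ∈ B', b0.1 < b1.1 →
      (b1.2 - a.2) * (b0.1 - a.1) < (b0.2 - a.2) * (b1.1 - a.1) := by
    intro a ha b0' hb0' b1' hb1' hlt
    obtain ⟨b0, hb0, rfl⟩ := hmemB' b0' hb0'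
    obtain ⟨b1, hb1, rfl⟩ := hmemB' b1' hb1'
    have hf := hM2 (a, (b0, b1))
      (Finset.mem_product.mpr ⟨ha, Finset.mem_product.mpr ⟨hb0, hb1⟩⟩)
    have hd : (0:ℝ) < b1.1 - b0.1 := by
      have : (b0.1 + dx : ℝ) < b1.1 + dx := hlt
      linarith
    have hf' : ((b1.2 - a.2) * (b0.1 + dx - a.1)
        - (b0.2 - a.2) * (b1.1 + dx - a.1)) / (b1.1 - b0.1) < M :=
      lt_of_lt_of_le hf (le_max_right _ _)
    rw [div_lt_iff₀ hd] at hf'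
    show ((b1.2 + M) - a.2) * ((b0.1 + dx) - a.1) < ((b0.2 + M) - a.2) * ((b1.1 + dx) - a.1)
    nlinarith [hf']
  have hBx' : DistinctX B' := distinctX_image dx M hBx
  obtain ⟨hXx, hdisj, hXcol, hXcup, hXcap⟩ :=
    glue hl hm hn A B' hAx hBx' hsep h2' h1' hAcol hAcup hAcap
      (fun h => hBcol (hasCollinear_image h))
      (fun h => hBcup (hasCup_image h))
      (fun h => hBcap (hasCap_image h))
  refine ⟨A ∪ B', hXx, ?_, hXcol, hXcup, hXcap⟩
  rw [Finset.card_union_of_disjoint hdisj, hB',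
    Finset.card_image_of_injective _ (trv_inj dx M)]

end
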